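/- arXiv:2410.16142 — 5 statements merged into one kernel-verified Lean document; each statement's English description precedes it below -/
import Mathlib

section
/- Let D be an integral domain with quotient field K, E ⊆ K nonempty, and I a nonzero ideal of D. Then (I·Int^R(E,D))_t ∩ D = I_t. In particular, if 𝔄 is a t-ideal of Int^R(E,D) with 𝔄 ∩ D ≠ (0), then 𝔄 ∩ D is a t-ideal of D. -/
open Polynomial

variable {K : Type*} [Field K]

/-- Evaluation of a rational function at a point of `K`. -/
noncomputable def rfEval (e : K) (φ : RatFunc K) : K :=
  RatFunc.eval (RingHom.id K) e φ

/-- `φ` is defined at every point of `E` (its reduced denominator does not vanish)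
and maps `E` into `T`. -/
def MapsInto (E T : Set K) (φ : RatFunc K) : Prop :=
  ∀ e ∈ E, Polynomial.eval e φ.denom ≠ 0 ∧ rfEval e φ ∈ T

theorem eval₂_id_eq_eval (e : K) (p : K[X]) :
    p.eval₂ (RingHom.id K) e = p.eval e := by rfl

theorem denom_eval_ne_zero_of_dvd {x y z : RatFunc K} (h : z.denom ∣ x.denom * y.denom)
    {e : K} (hx : Polynomial.eval e x.denom ≠ 0) (hy : Polynomial.eval e y.denom ≠ 0) :
    Polynomial.eval e z.denom ≠ 0 := by
  obtain ⟨c, hc⟩ := h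
  intro h0
  apply mul_ne_zero hx hy
  have : Polynomial.eval e (x.denom * y.denom) = Polynomial.eval e z.denom * Polynomial.eval e c := by
    rw [hc, Polynomial.eval_mul]
  rw [Polynomial.eval_mul] at this
  rw [this, h0, zero_mul]

theorem rfEval_add {x y : RatFunc K} {e : K} (hx : Polynomial.eval e x.denom ≠ 0)
    (hy : Polynomial.eval e y.denom ≠ 0) : rfEval e (x + y) = rfEval e x + rfEval e y := by
  apply RatFunc.eval_add <;> rw [eval₂_id_eq_eval] <;> assumption

theorem rfEval_mul {x y : RatFunc K} {e : K} (hx : Polynomial.eval e x.denom ≠ 0)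
    (hy : Polynomial.eval e y.denom ≠ 0) : rfEval e (x * y) = rfEval e x * rfEval e y := by
  apply RatFunc.eval_mul <;> rw [eval₂_id_eq_eval] <;> assumption

theorem denom_const (c : K) : (algebraMap K (RatFunc K) c).denom = 1 := by
  have : algebraMap K (RatFunc K) c = algebraMap K[X] (RatFunc K) (Polynomial.C c) := by
    rw [RatFunc.algebraMap_C]; rfl
  rw [this, RatFunc.denom_algebraMap]

theorem rfEval_const (e c : K) : rfEval e (algebraMap K (RatFunc K) c) = c := by
  have : algebraMap K (RatFunc K) c = RatFunc.C c := rfl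
  rw [rfEval, this, RatFunc.eval_C]; rfl

/-- The ring of `D`-valued rational functions on `E`:
`Int^R(E,D) = {φ ∈ K(X) : φ(E) ⊆ D}`. -/
def IntR (E : Set K) (D : Subring K) : Subring (RatFunc K) where
  carrier := {φ | MapsInto E (D : Set K) φ}
  zero_mem' := by
    intro e _
    constructor
    · rw [RatFunc.denom_zero]; simp
    · have : rfEval e (0 : RatFunc K) = 0 := by rw [rfEval, RatFunc.eval_zero]
      rw [this]; exact D.zero_mem
  one_mem' := by
    intro e _
    constructor
    · rw [RatFunc.denom_one]; simp
    · have : rfEval e (1 : RatFunc K) = 1 := by rw [rfEval, RatFunc.eval_one]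
      rw [this]; exact D.one_mem
  add_mem' := by
    intro x y hx hy e he
    obtain ⟨hxd, hxv⟩ := hx e he
    obtain ⟨hyd, hyv⟩ := hy e he
    refine ⟨denom_eval_ne_zero_of_dvd (RatFunc.denom_add_dvd x y) hxd hyd, ?_⟩
    rw [rfEval_add hxd hyd]; exact D.add_mem hxv hyv
  mul_mem' := by
    intro x y hx hy e he
    obtain ⟨hxd, hxv⟩ := hx e he
    obtain ⟨hyd, hyv⟩ := hy e he
    refine ⟨denom_eval_ne_zero_of_dvd (RatFunc.denom_mul_dvd x y) hxd hyd, ?_⟩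
    rw [rfEval_mul hxd hyd]; exact D.mul_mem hxv hyv
  neg_mem' := by
    intro x hx e he
    obtain ⟨hxd, hxv⟩ := hx e he
    have hconst : Polynomial.eval e (algebraMap K (RatFunc K) (-1 : K)).denom ≠ 0 := by
      rw [denom_const]; simp
    have hneg : -x = algebraMap K (RatFunc K) (-1 : K) * x := by
      rw [map_neg, map_one, neg_one_mul]
    constructor
    · rw [hneg]
      exact denom_eval_ne_zero_of_dvd (RatFunc.denom_mul_dvd _ x)
        (by rw [denom_const]; simp) hxd
    · rw [hneg, rfEval_mul hconst hxd, rfEval_const]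
      rw [neg_one_mul]
      exact D.neg_mem hxv

theorem mem_IntR_iff {E : Set K} {D : Subring K} {φ : RatFunc K} :
    φ ∈ IntR E D ↔ MapsInto E (D : Set K) φ := Iff.rfl

theorem const_mem_IntR {E : Set K} {D : Subring K} {d : K} (hd : d ∈ D) :
    algebraMap K (RatFunc K) d ∈ IntR E D := by
  intro e _
  refine ⟨by rw [denom_const]; simp, ?_⟩
  rw [rfEval_const]; exact hd

/-- The canonical map `D → Int^R(E,D)` sending `d` to the constant rational function `d`. -/
noncomputable def constHom (E : Set K) (D : Subring K) : D →+* IntR E D where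
  toFun d := ⟨algebraMap K (RatFunc K) (d : K), const_mem_IntR d.2⟩
  map_one' := by ext; simp
  map_mul' x y := by ext; simp
  map_zero' := by ext; simp
  map_add' x y := by ext; simp

/-- Evaluation at a point `a ∈ E`, as a ring homomorphism `Int^R(E,D) → D`. -/
noncomputable def evalHom (E : Set K) (D : Subring K) (a : K) (ha : a ∈ E) :
    IntR E D →+* D where
  toFun φ := ⟨rfEval a φ.1, (φ.2 a ha).2⟩
  map_one' := by
    ext
    show rfEval a (1 : RatFunc K) = 1
    rw [rfEval, RatFunc.eval_one]
  map_mul' x y := by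
    ext
    exact rfEval_mul (x.2 a ha).1 (y.2 a ha).1
  map_zero' := by
    ext
    show rfEval a (0 : RatFunc K) = 0
    rw [rfEval, RatFunc.eval_zero]
  map_add' x y := by
    ext
    exact rfEval_add (x.2 a ha).1 (y.2 a ha).1

/-- `K` is the quotient field of `D`. -/
def IsQuotField (D : Subring K) : Prop :=
  ∀ x : K, ∃ a ∈ D, ∃ b ∈ D, b ≠ 0 ∧ x = a / b
/-- The localization `S⁻¹A` of a subring `A` of a field at a multiplicative submonoid
`S` of `A` not containing `0`, realized as a subring of the ambient field. -/
def locSubring {F : Type*} [Field F] (A : Subring F) (S : Submonoid A)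
    (hS : ∀ s ∈ S, s ≠ (0 : A)) : Subring F where
  carrier := {x | ∃ a : A, ∃ s ∈ S, x = (a : F) / (s : F)}
  zero_mem' := ⟨0, 1, S.one_mem, by simp⟩
  one_mem' := ⟨1, 1, S.one_mem, by simp⟩
  add_mem' := by
    rintro x y ⟨a, s, hs, rfl⟩ ⟨b, t, ht, rfl⟩
    refine ⟨a * t + b * s, s * t, S.mul_mem hs ht, ?_⟩
    have hs0 : (s : F) ≠ 0 := fun h => hS s hs (Subtype.ext h)
    have ht0 : (t : F) ≠ 0 := fun h => hS t ht (Subtype.ext h)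
    push_cast
    field_simp
  mul_mem' := by
    rintro x y ⟨a, s, hs, rfl⟩ ⟨b, t, ht, rfl⟩
    refine ⟨a * b, s * t, S.mul_mem hs ht, ?_⟩
    push_cast
    field_simp
  neg_mem' := by
    rintro x ⟨a, s, hs, rfl⟩
    exact ⟨-a, s, hs, by push_cast; ring⟩

/-- The "inverse" `{x ∈ F : xS ⊆ A}` of a subset `S` of a field `F`, relative to
a subring `A` of `F`. -/
def dualSet {F : Type*} [Field F] (A : Subring F) (S : Set F) : Set F :=
  {x | ∀ y ∈ S, x * y ∈ A}

/-- An ideal of a subring of `F`, viewed as a subset of `F`. -/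
def idealSet {F : Type*} [Field F] (A : Subring F) (I : Ideal A) : Set F :=
  (fun a : A => (a : F)) '' (I : Set A)

/-- The `v`-closure (divisorial closure) of a subset of `F` relative to a subring `A`. -/
def vSet {F : Type*} [Field F] (A : Subring F) (S : Set F) : Set F :=
  dualSet A (dualSet A S)

/-- The `t`-closure of an ideal of a subring `A` of `F`, as a subset of `F`. -/
def tSet {F : Type*} [Field F] (A : Subring F) (I : Ideal A) : Set F :=
  {x | ∃ J : Ideal A, J ≤ I ∧ J.FG ∧ J ≠ ⊥ ∧ x ∈ vSet A (idealSet A J)}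

theorem primeCompl_ne_zero {R : Type*} [CommRing R] [Nontrivial R] (P : Ideal R) [P.IsPrime] :
    ∀ s ∈ P.primeCompl, s ≠ (0 : R) := by
  intro s hs h0
  exact hs (by rw [h0]; exact P.zero_mem)

section Aux

variable {F : Type*} [Field F]

theorem aux_one_mem_dual (A : Subring F) (J : Ideal A) :
    (1 : F) ∈ dualSet A (idealSet A J) := by
  rintro y ⟨a, _, rfl⟩
  simpa using a.2

theorem aux_tSet_subset (A : Subring F) (I : Ideal A) : tSet A I ⊆ (A : Set F) := by
  rintro x ⟨J, _, _, _, hv⟩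
  simpa using hv 1 (aux_one_mem_dual A J)

theorem aux_idealSet_subset_tSet (A : Subring F) (I : Ideal A) (hI : I ≠ ⊥) :
    idealSet A I ⊆ tSet A I := by
  rintro x ⟨a, ha, rfl⟩
  obtain ⟨b, hbI, hb⟩ := Submodule.exists_mem_ne_zero_of_ne_bot hI
  refine ⟨Ideal.span {a} ⊔ Ideal.span {b}, sup_le ((Ideal.span_singleton_le_iff_mem _).2 ha)
    ((Ideal.span_singleton_le_iff_mem _).2 hbI),
    Submodule.FG.sup (Submodule.fg_span_singleton a) (Submodule.fg_span_singleton b), ?_, ?_⟩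
  · intro h
    have hbm : b ∈ Ideal.span {a} ⊔ Ideal.span {b} :=
      (le_sup_right : Ideal.span {b} ≤ _) (Ideal.mem_span_singleton_self b)
    rw [h] at hbm
    exact hb (by simpa using hbm)
  · intro z hz
    have ham : a ∈ Ideal.span {a} ⊔ Ideal.span {b} :=
      (le_sup_left : Ideal.span {a} ≤ _) (Ideal.mem_span_singleton_self a)
    have := hz _ ⟨a, ham, rfl⟩
    rwa [mul_comm] at this

/-- Descend a finitely generated subideal of `map f I` to a finitely generated
subideal of `I`. -/
theorem aux_exists_fg {A B : Type*} [CommRing A] [CommRing B] (f : A →+* B) (I : Ideal A)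
    {𝔍 : Ideal B} (hle : 𝔍 ≤ Ideal.map f I) (hfg : 𝔍.FG) :
    ∃ J : Ideal A, J.FG ∧ J ≤ I ∧ 𝔍 ≤ Ideal.map f J := by
  classical
  have single : ∀ g ∈ Ideal.map f I, ∃ J : Ideal A, J.FG ∧ J ≤ I ∧ g ∈ Ideal.map f J := by
    intro g hg
    refine Submodule.span_induction ?_ ?_ ?_ ?_ hg
    · rintro _ ⟨a, ha, rfl⟩
      exact ⟨Ideal.span {a}, Submodule.fg_span_singleton a,
        (Ideal.span_singleton_le_iff_mem _).2 ha,
        Ideal.mem_map_of_mem f (Ideal.mem_span_singleton_self a)⟩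
    · exact ⟨⊥, Submodule.fg_bot, bot_le, Submodule.zero_mem _⟩
    · rintro x y _ _ ⟨J₁, h₁f, h₁l, h₁m⟩ ⟨J₂, h₂f, h₂l, h₂m⟩
      exact ⟨J₁ ⊔ J₂, Submodule.FG.sup h₁f h₂f, sup_le h₁l h₂l,
        Submodule.add_mem _ (Ideal.map_mono le_sup_left h₁m)
          (Ideal.map_mono le_sup_right h₂m)⟩
    · rintro r x _ ⟨J, hJf, hJl, hJm⟩
      exact ⟨J, hJf, hJl, Ideal.mul_mem_left _ r hJm⟩
  obtain ⟨s, hs⟩ := hfg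
  have finset : ∀ t : Finset B, (↑t : Set B) ⊆ Ideal.map f I →
      ∃ J : Ideal A, J.FG ∧ J ≤ I ∧ (↑t : Set B) ⊆ Ideal.map f J := by
    intro t
    induction t using Finset.induction_on with
    | empty => exact fun _ => ⟨⊥, Submodule.fg_bot, bot_le, by simp⟩
    | insert g t hnot ih =>
      intro ht
      rw [Finset.coe_insert, Set.insert_subset_iff] at ht
      obtain ⟨J₁, h₁f, h₁l, h₁m⟩ := single g ht.1
      obtain ⟨J₂, h₂f, h₂l, h₂m⟩ := ih ht.2
      refine ⟨J₁ ⊔ J₂, Submodule.FG.sup h₁f h₂f, sup_le h₁l h₂l, ?_⟩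
      rw [Finset.coe_insert, Set.insert_subset_iff]
      exact ⟨Ideal.map_mono le_sup_left h₁m,
        fun y hy => Ideal.map_mono le_sup_right (h₂m hy)⟩
  have hsub : (↑s : Set B) ⊆ Ideal.map f I := by
    rw [← hs] at hle
    exact fun y hy => hle (Ideal.subset_span hy)
  obtain ⟨J, hJf, hJl, hJm⟩ := finset s hsub
  refine ⟨J, hJf, hJl, ?_⟩
  rw [← hs]
  exact Ideal.span_le.2 hJm

end Aux

section Key

variable {K : Type*} [Field K]

theorem aux_denom_const_eval (e c : K) :
    Polynomial.eval e (algebraMap K (RatFunc K) c).denom ≠ 0 := by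
  rw [denom_const]; simp

theorem aux_constHom_injective (E : Set K) (D : Subring K) :
    Function.Injective (constHom E D) := by
  intro a b h
  have : algebraMap K (RatFunc K) (a : K) = algebraMap K (RatFunc K) (b : K) :=
    congrArg Subtype.val h
  exact Subtype.ext ((algebraMap K (RatFunc K)).injective this)

theorem aux_map_ne_bot {E : Set K} {D : Subring K} {J : Ideal D} (hJ : J ≠ ⊥) :
    Ideal.map (constHom E D) J ≠ ⊥ := by
  rwa [Ne, Ideal.map_eq_bot_iff_of_injective (aux_constHom_injective E D)]

/-- Key lemma 1: constants in the `v`-closure of `J` are in the `v`-closure of the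
extension of `J`. -/
theorem aux_key1 {E : Set K} {D : Subring K} {J : Ideal D} (hJ : J ≠ ⊥) {x : K}
    (hx : x ∈ vSet D (idealSet D J)) :
    algebraMap K (RatFunc K) x ∈
      vSet (IntR E D) (idealSet (IntR E D) (Ideal.map (constHom E D) J)) := by
  intro φ hφ
  obtain ⟨j₀, hj₀J, hj₀⟩ := Submodule.exists_mem_ne_zero_of_ne_bot hJ
  have hj₀K : (j₀ : K) ≠ 0 := fun h => hj₀ (Subtype.ext h)
  -- φ times the constant j₀ is in IntR
  have h0 : φ * algebraMap K (RatFunc K) (j₀ : K) ∈ IntR E D :=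
    hφ _ ⟨constHom E D j₀, Ideal.mem_map_of_mem _ hj₀J, rfl⟩
  -- the denominator of φ does not vanish on E
  have hdφ : ∀ e ∈ E, Polynomial.eval e φ.denom ≠ 0 := by
    intro e he
    have heq : (φ * algebraMap K (RatFunc K) (j₀ : K)) * algebraMap K (RatFunc K) (j₀ : K)⁻¹
        = φ := by
      rw [mul_assoc, ← map_mul, mul_inv_cancel₀ hj₀K, map_one, mul_one]
    have hdvd := RatFunc.denom_mul_dvd (φ * algebraMap K (RatFunc K) (j₀ : K))
      (algebraMap K (RatFunc K) (j₀ : K)⁻¹)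
    rw [heq] at hdvd
    exact denom_eval_ne_zero_of_dvd hdvd ((h0 e he).1) (aux_denom_const_eval e _)
  -- the value of φ at each point of E multiplies J into D
  have hval : ∀ e ∈ E, rfEval e φ ∈ dualSet D (idealSet D J) := by
    rintro e he _ ⟨j, hjJ, rfl⟩
    have hm : φ * algebraMap K (RatFunc K) (j : K) ∈ IntR E D :=
      hφ _ ⟨constHom E D j, Ideal.mem_map_of_mem _ hjJ, rfl⟩
    have := (hm e he).2
    rwa [rfEval_mul (hdφ e he) (aux_denom_const_eval e _), rfEval_const] at this
  -- conclude
  intro e he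
  constructor
  · have hdvd := RatFunc.denom_mul_dvd (algebraMap K (RatFunc K) x) φ
    exact denom_eval_ne_zero_of_dvd hdvd (aux_denom_const_eval e _) (hdφ e he)
  · rw [rfEval_mul (aux_denom_const_eval e _) (hdφ e he), rfEval_const]
    exact hx (rfEval e φ) (hval e he)

/-- Key lemma 2: constants in the dual of `J` multiply the extension of `J` into
`IntR E D`. -/
theorem aux_key2 {E : Set K} {D : Subring K} {J : Ideal D} {z : K}
    (hz : z ∈ dualSet D (idealSet D J)) :
    ∀ ρ : IntR E D, ρ ∈ Ideal.map (constHom E D) J →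
      algebraMap K (RatFunc K) z * (ρ : RatFunc K) ∈ IntR E D := by
  intro ρ hρ
  refine Submodule.span_induction (p := fun (a : IntR E D) (_ : a ∈ Ideal.map (constHom E D) J) =>
    algebraMap K (RatFunc K) z * (a : RatFunc K) ∈ IntR E D) ?_ ?_ ?_ ?_ hρ
  · rintro _ ⟨j, hjJ, rfl⟩
    have : algebraMap K (RatFunc K) z * ((constHom E D j : IntR E D) : RatFunc K)
        = algebraMap K (RatFunc K) (z * (j : K)) := by
      show algebraMap K (RatFunc K) z * algebraMap K (RatFunc K) (j : K) = _
      rw [map_mul]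
    rw [this]
    exact const_mem_IntR (hz _ ⟨j, hjJ, rfl⟩)
  · simpa using (IntR E D).zero_mem
  · intro a b _ _ ha hb
    push_cast
    rw [mul_add]
    exact (IntR E D).add_mem ha hb
  · intro r a _ ha
    rw [smul_eq_mul]
    have hra : ((r * a : IntR E D) : RatFunc K) = (r : RatFunc K) * (a : RatFunc K) := rfl
    rw [hra, mul_left_comm]
    exact (IntR E D).mul_mem r.2 ha

theorem aux_const_eq_constHom {E : Set K} {D : Subring K} (x : K) (hx : x ∈ D) :
    algebraMap K (RatFunc K) x = ((constHom E D ⟨x, hx⟩ : IntR E D) : RatFunc K) := rfl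

end Key

/-- for a nonzero ideal `I` of `D`, `(I·Int^R(E,D))_t ∩ D = I_t`; in
particular the contraction of a `t`-ideal `𝔄` of `Int^R(E,D)` with `𝔄 ∩ D ≠ 0` is a
`t`-ideal of `D`. -/
theorem t_of_extension_cap_eq_t {K : Type*} [Field K] (D : Subring K) (E : Set K)
    (hFrac : IsQuotField D) (hEne : E.Nonempty) :
    (∀ I : Ideal D, I ≠ ⊥ →
      algebraMap K (RatFunc K) ⁻¹'
          tSet (IntR E D) (Ideal.map (constHom E D) I) ∩ (D : Set K) = tSet D I) ∧
    (∀ 𝔄 : Ideal (IntR E D), tSet (IntR E D) 𝔄 = idealSet (IntR E D) 𝔄 →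
      Ideal.comap (constHom E D) 𝔄 ≠ ⊥ →
      tSet D (Ideal.comap (constHom E D) 𝔄) = idealSet D (Ideal.comap (constHom E D) 𝔄)) := by
  obtain ⟨a, haE⟩ := hEne
  constructor
  · intro I hI
    ext x
    constructor
    · rintro ⟨hxt, hxD⟩
      obtain ⟨𝔍, h𝔍le, h𝔍fg, h𝔍ne, hxv⟩ := hxt
      obtain ⟨J, hJfg, hJle, hJm⟩ := aux_exists_fg (constHom E D) I h𝔍le h𝔍fg
      have hJne : J ≠ ⊥ := by
        rintro rfl
        exact h𝔍ne (le_bot_iff.1 (hJm.trans (by rw [Ideal.map_bot])))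
      refine ⟨J, hJle, hJfg, hJne, ?_⟩
      intro z hz
      -- z̃ is in the dual of idealSet 𝔍
      have hzdual : algebraMap K (RatFunc K) z ∈
          dualSet (IntR E D) (idealSet (IntR E D) 𝔍) := by
        rintro _ ⟨ρ, hρ, rfl⟩
        exact aux_key2 hz ρ (hJm hρ)
      have hmem := hxv _ hzdual
      have : rfEval a (algebraMap K (RatFunc K) x * algebraMap K (RatFunc K) z) ∈ D :=
        (hmem a haE).2
      rwa [← map_mul, rfEval_const] at this
    · intro hx
      have hxD : x ∈ D := aux_tSet_subset D I hx
      obtain ⟨J, hJle, hJfg, hJne, hxv⟩ := hx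
      refine ⟨⟨Ideal.map (constHom E D) J, Ideal.map_mono hJle, hJfg.map _,
        aux_map_ne_bot hJne, aux_key1 hJne hxv⟩, hxD⟩
  · intro 𝔄 h𝔄 hne
    apply Set.Subset.antisymm
    · intro x hx
      have hxD : x ∈ D := aux_tSet_subset D _ hx
      obtain ⟨J, hJle, hJfg, hJne, hxv⟩ := hx
      have hmap : Ideal.map (constHom E D) J ≤ 𝔄 :=
        Ideal.map_le_iff_le_comap.2 hJle
      have hct : algebraMap K (RatFunc K) x ∈ tSet (IntR E D) 𝔄 :=
        ⟨Ideal.map (constHom E D) J, hmap, hJfg.map _, aux_map_ne_bot hJne,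
          aux_key1 hJne hxv⟩
      rw [h𝔄] at hct
      obtain ⟨ρ, hρ𝔄, hρeq⟩ := hct
      refine ⟨⟨x, hxD⟩, ?_, rfl⟩
      show constHom E D ⟨x, hxD⟩ ∈ 𝔄
      have : constHom E D ⟨x, hxD⟩ = ρ := Subtype.ext hρeq.symm
      rwa [this]
    · exact aux_idealSet_subset_tSet D _ hne
end

section
/- Let D be an integral domain with quotient field K, E ⊆ K nonempty, and I a nonzero fractional ideal of D. Then (I·Int^R(E,D))⁻¹ = Int^R(E, I⁻¹) := {φ ∈ K(X) : φ(E) ⊆ I⁻¹}, and consequently (I·Int^R(E,D))_v = Int^R(E, I_v). -/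
open Polynomial

variable {K : Type*} [Field K]

open Pointwise in
/-- The product ideal `I·Int^R(E,D)` inside `K(X)`: the additive subgroup generated by
products `x·φ` with `x ∈ I` and `φ ∈ Int^R(E,D)`. -/
def prodSet {K : Type*} [Field K] (I : Set K) (E : Set K) (D : Subring K) : Set (RatFunc K) :=
  (AddSubgroup.closure
    ((algebraMap K (RatFunc K) '' I) * (IntR E D : Set (RatFunc K))) : Set (RatFunc K))

section Aux
open Pointwise

theorem denom_const_eval {c e : K} : Polynomial.eval e (algebraMap K (RatFunc K) c).denom ≠ 0 := by
  rw [denom_const]; simp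

theorem rfEval_neg {x : RatFunc K} {e : K} (hx : Polynomial.eval e x.denom ≠ 0) :
    rfEval e (-x) = - rfEval e x := by
  have hneg : -x = algebraMap K (RatFunc K) (-1 : K) * x := by
    rw [map_neg, map_one, neg_one_mul]
  rw [hneg, rfEval_mul denom_const_eval hx, rfEval_const, neg_one_mul]

theorem denom_neg_eval {x : RatFunc K} {e : K} (hx : Polynomial.eval e x.denom ≠ 0) :
    Polynomial.eval e (-x).denom ≠ 0 := by
  have hneg : -x = algebraMap K (RatFunc K) (-1 : K) * x := by
    rw [map_neg, map_one, neg_one_mul]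
  rw [hneg]
  exact denom_eval_ne_zero_of_dvd (RatFunc.denom_mul_dvd _ x) denom_const_eval hx

/-- `{φ | MapsInto E T φ}` as an additive subgroup, when `T` is an additive subgroup. -/
def mapsIntoAddSubgroup (E : Set K) (T : AddSubgroup K) : AddSubgroup (RatFunc K) where
  carrier := {φ | MapsInto E (T : Set K) φ}
  zero_mem' := by
    intro e _
    refine ⟨by rw [RatFunc.denom_zero]; simp, ?_⟩
    have : rfEval e (0 : RatFunc K) = 0 := by rw [rfEval, RatFunc.eval_zero]
    rw [this]; exact T.zero_mem
  add_mem' := by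
    intro x y hx hy e he
    obtain ⟨hxd, hxv⟩ := hx e he
    obtain ⟨hyd, hyv⟩ := hy e he
    refine ⟨denom_eval_ne_zero_of_dvd (RatFunc.denom_add_dvd x y) hxd hyd, ?_⟩
    rw [rfEval_add hxd hyd]; exact T.add_mem hxv hyv
  neg_mem' := by
    intro x hx e he
    obtain ⟨hxd, hxv⟩ := hx e he
    refine ⟨denom_neg_eval hxd, ?_⟩
    rw [rfEval_neg hxd]; exact T.neg_mem hxv

theorem denom_mul3_eval {φ g : RatFunc K} {x e : K} (hφ : Polynomial.eval e φ.denom ≠ 0)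
    (hg : Polynomial.eval e g.denom ≠ 0) :
    Polynomial.eval e (φ * (algebraMap K (RatFunc K) x * g)).denom ≠ 0 :=
  denom_eval_ne_zero_of_dvd (RatFunc.denom_mul_dvd _ _) hφ
    (denom_eval_ne_zero_of_dvd (RatFunc.denom_mul_dvd _ _) denom_const_eval hg)

theorem rfEval_mul3 {φ g : RatFunc K} {x e : K} (hφ : Polynomial.eval e φ.denom ≠ 0)
    (hg : Polynomial.eval e g.denom ≠ 0) :
    rfEval e (φ * (algebraMap K (RatFunc K) x * g)) = rfEval e φ * (x * rfEval e g) := by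
  rw [rfEval_mul hφ (denom_eval_ne_zero_of_dvd (RatFunc.denom_mul_dvd _ _) denom_const_eval hg),
    rfEval_mul denom_const_eval hg, rfEval_const]

/-- Key lemma: `(I·Int^R(E,D))⁻¹ = Int^R(E, I⁻¹)` for any `I` containing a nonzero element. -/
theorem dual_prodSet_eq (D : Subring K) (E : Set K) (I : Set K)
    (hne : ∃ x ∈ I, x ≠ (0 : K)) :
    dualSet (IntR E D) (prodSet I E D) = {φ : RatFunc K | MapsInto E (dualSet D I) φ} := by
  have hcx : ∀ y ∈ I, algebraMap K (RatFunc K) y ∈ prodSet I E D := fun y hy =>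
    AddSubgroup.subset_closure
      ⟨algebraMap K (RatFunc K) y, ⟨y, hy, rfl⟩, 1, (IntR E D).one_mem, mul_one _⟩
  ext φ
  constructor
  · intro hφ e he
    obtain ⟨x, hxI, hx0⟩ := hne
    have hmem := hφ _ (hcx x hxI)
    have hxrw : φ = algebraMap K (RatFunc K) x⁻¹ * (φ * algebraMap K (RatFunc K) x) := by
      rw [mul_comm φ, ← mul_assoc, ← map_mul, inv_mul_cancel₀ hx0, map_one, one_mul]
    have h1 := RatFunc.denom_mul_dvd (algebraMap K (RatFunc K) x⁻¹)
      (φ * algebraMap K (RatFunc K) x)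
    rw [← hxrw] at h1
    have hden : Polynomial.eval e φ.denom ≠ 0 :=
      denom_eval_ne_zero_of_dvd h1 denom_const_eval (hmem e he).1
    refine ⟨hden, fun y hy => ?_⟩
    have h2 := (hφ _ (hcx y hy) e he).2
    rwa [rfEval_mul hden denom_const_eval, rfEval_const] at h2
  · intro hφ ψ hψ
    have hgen : (algebraMap K (RatFunc K) '' I) * (IntR E D : Set (RatFunc K)) ⊆
        ((IntR E D).toAddSubgroup.comap (AddMonoidHom.mulLeft φ) : Set (RatFunc K)) := by
      rintro χ ⟨_, ⟨x, hxI, rfl⟩, g, hg, rfl⟩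
      show φ * (algebraMap K (RatFunc K) x * g) ∈ IntR E D
      intro e he
      obtain ⟨hφd, hφv⟩ := hφ e he
      obtain ⟨hgd, hgv⟩ := hg e he
      refine ⟨denom_mul3_eval hφd hgd, ?_⟩
      rw [rfEval_mul3 hφd hgd, ← mul_assoc]
      exact D.mul_mem (hφv x hxI) hgv
    exact AddSubgroup.closure_le _ |>.mpr hgen hψ

/-- `Int^R(E, I⁻¹)` absorbs `prodSet I⁻¹`. -/
theorem prodSet_dual_subset (D : Subring K) (E : Set K) (I : Set K) :
    prodSet (dualSet D I) E D ⊆ {φ : RatFunc K | MapsInto E (dualSet D I) φ} := by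
  let T : AddSubgroup K :=
    { carrier := dualSet D I
      zero_mem' := fun y _ => by rw [zero_mul]; exact D.zero_mem
      add_mem' := fun {a b} ha hb y hy => by
        rw [add_mul]; exact D.add_mem (ha y hy) (hb y hy)
      neg_mem' := fun {a} ha y hy => by rw [neg_mul]; exact D.neg_mem (ha y hy) }
  have hgen : (algebraMap K (RatFunc K) '' dualSet D I) * (IntR E D : Set (RatFunc K)) ⊆
      (mapsIntoAddSubgroup E T : Set (RatFunc K)) := by
    rintro χ ⟨_, ⟨x, hxI, rfl⟩, g, hg, rfl⟩
    intro e he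
    obtain ⟨hgd, hgv⟩ := hg e he
    refine ⟨denom_eval_ne_zero_of_dvd (RatFunc.denom_mul_dvd _ _) denom_const_eval hgd, ?_⟩
    rw [rfEval_mul denom_const_eval hgd, rfEval_const]
    intro y hy
    have : x * rfEval e g * y = rfEval e g * (x * y) := by ring
    rw [this]
    exact D.mul_mem hgv (hxI y hy)
  exact fun ψ hψ => AddSubgroup.closure_le _ |>.mpr hgen hψ

end Aux

/-- for a nonzero fractional ideal `I` of `D`,
`(I·Int^R(E,D))⁻¹ = Int^R(E, I⁻¹)`; consequently `(I·Int^R(E,D))_v = Int^R(E, I_v)`. -/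
theorem inv_of_extension_eq_intR_inv {K : Type*} [Field K] (D : Subring K) (E : Set K)
    (hFrac : IsQuotField D) (hEne : E.Nonempty) (I : Set K)
    (h0 : (0 : K) ∈ I) (hadd : ∀ x ∈ I, ∀ y ∈ I, x + y ∈ I)
    (hsmul : ∀ d ∈ D, ∀ x ∈ I, d * x ∈ I)
    (hne : ∃ x ∈ I, x ≠ (0 : K))
    (hfrac : ∃ d ∈ D, d ≠ (0 : K) ∧ ∀ x ∈ I, d * x ∈ D) :
    dualSet (IntR E D) (prodSet I E D) = {φ : RatFunc K | MapsInto E (dualSet D I) φ} ∧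
    vSet (IntR E D) (prodSet I E D) = {φ : RatFunc K | MapsInto E (vSet D I) φ} := by
  have part1 := dual_prodSet_eq D E I hne
  refine ⟨part1, ?_⟩
  have hne' : ∃ x ∈ dualSet D I, x ≠ (0 : K) := by
    obtain ⟨d, hdD, hd0, hdI⟩ := hfrac
    exact ⟨d, fun y hy => hdI y hy, hd0⟩
  show dualSet (IntR E D) (dualSet (IntR E D) (prodSet I E D)) = _
  rw [part1]
  ext φ
  constructor
  · intro hφ
    have : φ ∈ dualSet (IntR E D) (prodSet (dualSet D I) E D) :=
      fun ψ hψ => hφ ψ (prodSet_dual_subset D E I hψ)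
    rw [dual_prodSet_eq D E (dualSet D I) hne'] at this
    exact this
  · intro hφ ψ hψ
    intro e he
    obtain ⟨hφd, hφv⟩ := hφ e he
    obtain ⟨hψd, hψv⟩ := hψ e he
    refine ⟨denom_eval_ne_zero_of_dvd (RatFunc.denom_mul_dvd _ _) hφd hψd, ?_⟩
    rw [rfEval_mul hφd hψd]
    exact hφv (rfEval e ψ) hψv
end

section
/- Let D be an integral domain with quotient field K and E ⊆ K nonempty. The ring Int^R(E,D) is integrally closed (in its quotient field K(X)) if and only if D is integrally closed (in K). -/
open Polynomial

variable {K : Type*} [Field K]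

/-- A valuation subring contains every element integral over it. -/
theorem valuationSubring_mem_of_integral {F : Type*} [Field F] (V : ValuationSubring F)
    {x : F} (hx : IsIntegral V x) : x ∈ V := by
  have hv : Valuation.Integers V.valuation V :=
    { hom_inj := Subtype.coe_injective
      map_le_one := fun a => V.valuation_le_one a
      exists_of_le_one := fun r hr => ⟨⟨r, V.mem_of_valuation_le_one r hr⟩, rfl⟩ }
  exact V.mem_of_valuation_le_one x ((Valuation.mem_integer_iff _ _).mp (hv.mem_of_integral hx))

/-- The local ring at a point `e`, as a valuation subring of `K(X)`. -/
noncomputable def Oe (e : K) : ValuationSubring (RatFunc K) where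
  toSubring := IntR {e} (⊤ : Subring K)
  mem_or_inv_mem' := by
    intro φ
    by_cases hd : Polynomial.eval e φ.denom = 0
    · right
      have hφ : φ ≠ 0 := by
        rintro rfl
        rw [RatFunc.denom_zero] at hd
        simp at hd
      have hnum : Polynomial.eval e φ.num ≠ 0 := by
        obtain ⟨u, v, huv⟩ := RatFunc.isCoprime_num_denom φ
        intro h0
        have := congrArg (Polynomial.eval e) huv
        simp [Polynomial.eval_add, Polynomial.eval_mul, h0, hd] at this
      have hdvd : (φ⁻¹).denom ∣ φ.num := by
        have h1 : φ⁻¹ = algebraMap K[X] (RatFunc K) φ.denom / algebraMap K[X] (RatFunc K) φ.num := by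
          conv_lhs => rw [← RatFunc.num_div_denom φ]
          rw [inv_div]
        rw [h1]
        exact RatFunc.denom_div_dvd _ _
      intro x hx
      rw [Set.mem_singleton_iff] at hx
      subst hx
      refine ⟨?_, trivial⟩
      intro h0
      obtain ⟨c, hc⟩ := hdvd
      apply hnum
      rw [hc, Polynomial.eval_mul, h0, zero_mul]
    · left
      intro x hx
      rw [Set.mem_singleton_iff] at hx
      subst hx
      exact ⟨hd, trivial⟩

/-- `Int^R(E,D)` is integrally closed in `K(X)` iff `D` is integrally
closed in `K`. -/
theorem intR_integrallyClosed_iff {K : Type*} [Field K] (D : Subring K) (E : Set K)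
    (hFrac : IsQuotField D) (hEne : E.Nonempty) :
    IsIntegrallyClosedIn (IntR E D) (RatFunc K) ↔ IsIntegrallyClosedIn D K := by
  rw [isIntegrallyClosedIn_iff, isIntegrallyClosedIn_iff]
  constructor
  · rintro ⟨-, hcl⟩
    refine ⟨Subtype.coe_injective, ?_⟩
    intro x hx
    obtain ⟨p, hpm, hp⟩ := hx
    have hint : IsIntegral (IntR E D) (algebraMap K (RatFunc K) x) := by
      refine ⟨p.map (constHom E D), hpm.map _, ?_⟩
      rw [Polynomial.eval₂_map]
      have hcomp : (algebraMap (IntR E D) (RatFunc K)).comp (constHom E D)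
          = (algebraMap K (RatFunc K)).comp (algebraMap D K) := by
        ext d; rfl
      rw [hcomp, ← Polynomial.hom_eval₂, hp, map_zero]
    obtain ⟨y, hy⟩ := hcl hint
    have hmem : algebraMap K (RatFunc K) x ∈ IntR E D := hy ▸ y.2
    obtain ⟨a, ha⟩ := hEne
    have := (hmem a ha).2
    rw [rfEval_const] at this
    exact ⟨⟨x, this⟩, rfl⟩
  · rintro ⟨-, hcl⟩
    refine ⟨Subtype.coe_injective, ?_⟩
    intro φ hφ
    obtain ⟨p, hpm, hp⟩ := hφ
    have hOe : ∀ e ∈ E, φ ∈ Oe e := by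
      intro e he
      have hle : (IntR E D : Subring (RatFunc K)) ≤ (Oe e).toSubring := by
        intro ψ hψ x hx
        rw [Set.mem_singleton_iff] at hx
        rw [hx]
        exact ⟨(hψ e he).1, trivial⟩
      apply valuationSubring_mem_of_integral (Oe e)
      refine ⟨p.map (Subring.inclusion hle), hpm.map _, ?_⟩
      rw [Polynomial.eval₂_map]
      have hcomp : (algebraMap (Oe e) (RatFunc K)).comp (Subring.inclusion hle)
          = algebraMap (IntR E D) (RatFunc K) := by
        ext c; rfl
      rw [hcomp, hp]
    have hmemIntR : φ ∈ IntR E D := by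
      intro e he
      refine ⟨(hOe e he e rfl).1, ?_⟩
      -- show the value is integral over D
      have hint : IsIntegral D (rfEval e φ) := by
        refine ⟨p.map (evalHom E D e he), hpm.map _, ?_⟩
        rw [Polynomial.eval₂_map]
        -- evaluation ring hom on the local ring at e
        set O := Oe e with hO
        have hle : (IntR E D : Subring (RatFunc K)) ≤ O.toSubring := by
          intro ψ hψ x hx
          rw [Set.mem_singleton_iff] at hx
          rw [hx]
          exact ⟨(hψ e he).1, trivial⟩
        let ev : O.toSubring →+* K :=
          (Subring.topEquiv : ((⊤ : Subring K) : Subring K) ≃+* K).toRingHom.comp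
            (evalHom {e} ⊤ e rfl)
        let xO : O := ⟨φ, hOe e he⟩
        have h1 : Polynomial.eval xO (p.map (Subring.inclusion hle)) = 0 := by
          apply Subtype.coe_injective
          push_cast
          have : ((Polynomial.eval xO (p.map (Subring.inclusion hle)) : O) : RatFunc K)
              = Polynomial.eval₂ (algebraMap O (RatFunc K)) φ (p.map (Subring.inclusion hle)) := by
            rw [show φ = (algebraMap O (RatFunc K)) xO from rfl, Polynomial.eval₂_hom]
            rfl
          rw [this, Polynomial.eval₂_map]
          have hcomp : (algebraMap O (RatFunc K)).comp (Subring.inclusion hle)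
              = algebraMap (IntR E D) (RatFunc K) := by
            ext c; rfl
          rw [hcomp, hp]
        have h2 : ev (Polynomial.eval xO (p.map (Subring.inclusion hle))) = 0 := by
          rw [h1, map_zero]
        rw [Polynomial.eval, Polynomial.hom_eval₂, Polynomial.eval₂_map,
          RingHom.comp_id] at h2
        have hcomp2 : ev.comp (Subring.inclusion hle)
            = (algebraMap D K).comp (evalHom E D e he) := by
          ext c; rfl
        rw [hcomp2] at h2
        have hx : ev xO = rfEval e φ := rfl
        rw [hx] at h2
        exact h2
      obtain ⟨y, hy⟩ := hcl hint
      exact hy ▸ y.2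
    exact ⟨⟨φ, hmemIntR⟩, rfl⟩
end

section
/- Let D be an integral domain with quotient field K and E ⊆ K nonempty. Then Int^R(E,D) is seminormal if and only if D is seminormal, where a domain R with quotient field F is seminormal if for all α ∈ F, α² ∈ R and α³ ∈ R imply α ∈ R. -/
open Polynomial

variable {K : Type*} [Field K]

theorem denom_pow_dvd_denom_pow (φ : RatFunc K) (n : ℕ) :
    φ.denom ^ n ∣ (φ ^ n).denom := by
  have h : (φ ^ n) = algebraMap K[X] (RatFunc K) (φ.num ^ n) /
      algebraMap K[X] (RatFunc K) (φ.denom ^ n) := by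
    rw [map_pow, map_pow, ← div_pow, RatFunc.num_div_denom]
  have hd1 : (algebraMap K[X] (RatFunc K)) (φ.denom ^ n) ≠ 0 :=
    RatFunc.algebraMap_ne_zero (pow_ne_zero _ (RatFunc.denom_ne_zero φ))
  have hd2 : (algebraMap K[X] (RatFunc K)) ((φ ^ n).denom) ≠ 0 :=
    RatFunc.algebraMap_ne_zero (RatFunc.denom_ne_zero _)
  have h2 : algebraMap K[X] (RatFunc K) ((φ ^ n).num) /
      algebraMap K[X] (RatFunc K) ((φ ^ n).denom) =
      algebraMap K[X] (RatFunc K) (φ.num ^ n) /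
      algebraMap K[X] (RatFunc K) (φ.denom ^ n) := by
    rw [RatFunc.num_div_denom, h]
  rw [div_eq_div_iff hd2 hd1, ← map_mul, ← map_mul] at h2
  have h3 : (φ ^ n).num * φ.denom ^ n = φ.num ^ n * (φ ^ n).denom :=
    IsFractionRing.injective K[X] (RatFunc K) h2
  have hcop : IsCoprime (φ.num ^ n) (φ.denom ^ n) :=
    (RatFunc.isCoprime_num_denom φ).pow
  exact hcop.symm.dvd_of_dvd_mul_left ⟨(φ ^ n).num, by rw [← h3]; ring⟩

theorem denom_eval_ne_zero_of_pow {φ : RatFunc K} {e : K} {n : ℕ} (hn : n ≠ 0)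
    (h : Polynomial.eval e (φ ^ n).denom ≠ 0) : Polynomial.eval e φ.denom ≠ 0 := by
  intro h0
  apply h
  obtain ⟨c, hc⟩ := (dvd_pow_self φ.denom hn).trans (denom_pow_dvd_denom_pow φ n)
  rw [hc, Polynomial.eval_mul, h0, zero_mul]

/-- `Int^R(E,D)` is seminormal iff `D` is seminormal. -/
theorem intR_seminormal_iff {K : Type*} [Field K] (D : Subring K) (E : Set K)
    (hFrac : IsQuotField D) (hEne : E.Nonempty) :
    (∀ φ : RatFunc K, φ ^ 2 ∈ IntR E D → φ ^ 3 ∈ IntR E D → φ ∈ IntR E D) ↔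
      (∀ α : K, α ^ 2 ∈ D → α ^ 3 ∈ D → α ∈ D) := by
  constructor
  · intro h α h2 h3
    obtain ⟨a, ha⟩ := hEne
    have hφ := h (algebraMap K (RatFunc K) α)
      (by rw [← map_pow]; exact const_mem_IntR h2)
      (by rw [← map_pow]; exact const_mem_IntR h3)
    have := (hφ a ha).2
    rwa [rfEval_const] at this
  · intro h φ h2 h3 e he
    obtain ⟨h2d, h2v⟩ := h2 e he
    obtain ⟨h3d, h3v⟩ := h3 e he
    have hd : Polynomial.eval e φ.denom ≠ 0 :=
      denom_eval_ne_zero_of_pow (two_ne_zero) h2d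
    refine ⟨hd, ?_⟩
    have e2 : rfEval e (φ ^ 2) = rfEval e φ ^ 2 := by
      rw [pow_two, rfEval_mul hd hd, pow_two]
    have e3 : rfEval e (φ ^ 3) = rfEval e φ ^ 3 := by
      rw [pow_succ, rfEval_mul h2d hd, e2]; ring
    exact h _ (by rw [← e2]; exact h2v) (by rw [← e3]; exact h3v)
end

section
/- Let D be an integral domain with quotient field K and E a nonempty subset of D. Then Int^R(E,D) is faithfully flat as a D[X]-module if and only if Int^R(E,D) = D[X]. -/
open Polynomial

variable {K : Type*} [Field K]

theorem eval_mem_of_coeff_mem {K : Type*} [Field K] {D : Subring K} {p : Polynomial K}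
    (hp : ∀ i, p.coeff i ∈ D) {e : K} (he : e ∈ D) : p.eval e ∈ D := by
  rw [Polynomial.eval_eq_sum_range]
  exact Subring.sum_mem D fun i _ => D.mul_mem (hp i) (D.pow_mem he i)

/-- `D[X]`: the polynomials with coefficients in `D`, as a subring of `K(X)`. -/
def polyDRing {K : Type*} [Field K] (D : Subring K) : Subring (RatFunc K) where
  carrier := {φ | ∃ p : Polynomial K, (∀ i, p.coeff i ∈ D) ∧
    φ = algebraMap (Polynomial K) (RatFunc K) p}
  zero_mem' := ⟨0, fun i => by rw [Polynomial.coeff_zero]; exact D.zero_mem, by simp⟩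
  one_mem' := ⟨1, fun i => by
      rw [Polynomial.coeff_one]
      split_ifs
      exacts [D.one_mem, D.zero_mem], by simp⟩
  add_mem' := by
    rintro x y ⟨p, hp, rfl⟩ ⟨q, hq, rfl⟩
    exact ⟨p + q, fun i => by rw [Polynomial.coeff_add]; exact D.add_mem (hp i) (hq i),
      by rw [map_add]⟩
  mul_mem' := by
    rintro x y ⟨p, hp, rfl⟩ ⟨q, hq, rfl⟩
    refine ⟨p * q, fun i => ?_, by rw [map_mul]⟩
    rw [Polynomial.coeff_mul]
    exact Subring.sum_mem D fun z _ => D.mul_mem (hp z.1) (hq z.2)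
  neg_mem' := by
    rintro x ⟨p, hp, rfl⟩
    exact ⟨-p, fun i => by rw [Polynomial.coeff_neg]; exact D.neg_mem (hp i), by rw [map_neg]⟩

theorem polyDRing_le_intR {K : Type*} [Field K] {D : Subring K} {E : Set K}
    (hE : E ⊆ (D : Set K)) : polyDRing D ≤ IntR E D := by
  rintro φ ⟨p, hp, rfl⟩
  intro e he
  constructor
  · rw [RatFunc.denom_algebraMap]; simp
  · have h1 : rfEval e (algebraMap (Polynomial K) (RatFunc K) p) = p.eval e := by
      rw [rfEval, RatFunc.eval_algebraMap]
      simp [eval₂_id_eq_eval]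
    rw [h1]
    exact eval_mem_of_coeff_mem hp (hE he)

/-- `Int^R(E,D)` as an algebra (hence module) over `D[X]`, when `E ⊆ D`. -/
noncomputable def polyDAlgebra {K : Type*} [Field K] {D : Subring K} {E : Set K}
    (hE : E ⊆ (D : Set K)) : Algebra (polyDRing D) (IntR E D) :=
  (Subring.inclusion (polyDRing_le_intR hE)).toAlgebra



/-- Faithfully flat contraction for principal ideals. -/
lemma ff_principal_contract {R B : Type*} [CommRing R] [CommRing B] [Algebra R B]
    [Module.FaithfullyFlat R B] {q x : R} (hx : ∃ b : B, algebraMap R B x = q • b) :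
    ∃ a : R, x = q * a := by
  obtain ⟨b₀, hb₀⟩ := hx
  set J := Ideal.span ({q} : Set R) with hJ
  let f : R →ₗ[R] R ⧸ J := LinearMap.toSpanSingleton R (R ⧸ J) (Submodule.Quotient.mk x)
  have hf : f = 0 := by
    rw [Module.FaithfullyFlat.zero_iff_lTensor_zero R B f]
    refine LinearMap.ext fun z => ?_
    show LinearMap.lTensor B f z = 0
    induction z using TensorProduct.induction_on with
    | zero => simp
    | add u v hu hv => rw [map_add, hu, hv, add_zero]
    | tmul b a =>
      rw [LinearMap.lTensor_tmul]
      have h1 : f a = a • Submodule.Quotient.mk x := rfl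
      have h2 : (Submodule.Quotient.mk x : R ⧸ J) = x • Submodule.Quotient.mk 1 := by
        rw [← Submodule.Quotient.mk_smul, smul_eq_mul, mul_one]
      have h3 : x • b = q • (b₀ * b) := by
        rw [Algebra.smul_def, hb₀, Algebra.smul_def, Algebra.smul_def]; ring
      have h4 : (q • Submodule.Quotient.mk 1 : R ⧸ J) = 0 := by
        rw [← Submodule.Quotient.mk_smul, smul_eq_mul, mul_one,
          Submodule.Quotient.mk_eq_zero]
        exact Ideal.subset_span rfl
      calc b ⊗ₜ[R] f a = a • (b ⊗ₜ[R] (Submodule.Quotient.mk x : R ⧸ J)) := by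
            rw [h1, TensorProduct.tmul_smul]
        _ = a • ((x • b) ⊗ₜ[R] (Submodule.Quotient.mk 1 : R ⧸ J)) := by
            rw [h2, ← TensorProduct.smul_tmul]
        _ = a • ((b₀ * b) ⊗ₜ[R] (q • Submodule.Quotient.mk 1 : R ⧸ J)) := by
            rw [h3, TensorProduct.smul_tmul]
        _ = 0 := by rw [h4, TensorProduct.tmul_zero, smul_zero]
  have : (Submodule.Quotient.mk x : R ⧸ J) = 0 := by
    have := congrFun (congrArg DFunLike.coe hf) 1
    simpa [f, LinearMap.toSpanSingleton_apply] using this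
  rw [Submodule.Quotient.mk_eq_zero, hJ, Ideal.mem_span_singleton] at this
  obtain ⟨a, ha⟩ := this
  exact ⟨a, ha⟩

/-- Clearing denominators: any polynomial over `K` becomes `D`-integral after
multiplying by a suitable nonzero element of `D`. -/
lemma exists_clear_denom {K : Type*} [Field K] {D : Subring K} (hFrac : IsQuotField D)
    (f : Polynomial K) : ∃ d : K, d ∈ D ∧ d ≠ 0 ∧ ∀ i, d * f.coeff i ∈ D := by
  have hx : ∀ x : K, ∃ b : K, b ∈ D ∧ b ≠ 0 ∧ b * x ∈ D := by
    intro x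
    obtain ⟨a, ha, b, hb, hb0, rfl⟩ := hFrac x
    exact ⟨b, hb, hb0, by rw [mul_div_cancel₀ _ hb0]; exact ha⟩
  choose g hg1 hg2 hg3 using hx
  refine ⟨∏ i ∈ f.support, g (f.coeff i), Subring.prod_mem D fun i _ => hg1 _,
    Finset.prod_ne_zero_iff.2 fun i _ => hg2 _, fun i => ?_⟩
  by_cases hi : i ∈ f.support
  · rw [← Finset.mul_prod_erase f.support (fun j => g (f.coeff j)) hi]
    have : g (f.coeff i) * (∏ j ∈ f.support.erase i, g (f.coeff j)) * f.coeff i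
        = (∏ j ∈ f.support.erase i, g (f.coeff j)) * (g (f.coeff i) * f.coeff i) := by ring
    rw [this]
    exact D.mul_mem (Subring.prod_mem D fun j _ => hg1 _) (hg3 _)
  · rw [Polynomial.notMem_support_iff.1 hi, mul_zero]
    exact D.zero_mem

set_option synthInstance.maxHeartbeats 1000000 in
set_option maxHeartbeats 1000000 in
/-- for `E ⊆ D`, `Int^R(E,D)` is faithfully flat as a `D[X]`-module iff
`Int^R(E,D) = D[X]`. -/
theorem intR_faithfullyFlat_over_polyD_iff {K : Type*} [Field K] (D : Subring K) (E : Set K)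
    (hFrac : IsQuotField D) (hEne : E.Nonempty) (hE : E ⊆ (D : Set K)) :
    @Module.FaithfullyFlat (polyDRing D) (IntR E D) _ _ (polyDAlgebra hE).toModule ↔
      polyDRing D = IntR E D := by
  letI : Algebra (polyDRing D) (IntR E D) := polyDAlgebra hE
  constructor
  · intro hFF
    refine le_antisymm (polyDRing_le_intR hE) ?_
    intro φ hφ
    obtain ⟨dn, hdn, hdn0, hdnc⟩ := exists_clear_denom hFrac φ.num
    obtain ⟨dd, hdd, hdd0, hddc⟩ := exists_clear_denom hFrac φ.denom
    set p : K[X] := Polynomial.C (dn * dd) * φ.num with hp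
    set q : K[X] := Polynomial.C (dn * dd) * φ.denom with hq
    have hpD : ∀ i, p.coeff i ∈ D := by
      intro i
      rw [hp, Polynomial.coeff_C_mul]
      have : dn * dd * φ.num.coeff i = dd * (dn * φ.num.coeff i) := by ring
      rw [this]; exact D.mul_mem hdd (hdnc i)
    have hqD : ∀ i, q.coeff i ∈ D := by
      intro i
      rw [hq, Polynomial.coeff_C_mul]
      have : dn * dd * φ.denom.coeff i = dn * (dd * φ.denom.coeff i) := by ring
      rw [this]; exact D.mul_mem hdn (hddc i)
    have hq0 : q ≠ 0 := mul_ne_zero (by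
        simpa using mul_ne_zero hdn0 hdd0) (RatFunc.denom_ne_zero φ)
    have hd : (algebraMap K[X] (RatFunc K) φ.denom) ≠ 0 :=
      RatFunc.algebraMap_ne_zero (RatFunc.denom_ne_zero φ)
    have hm : algebraMap K[X] (RatFunc K) φ.num = φ * algebraMap K[X] (RatFunc K) φ.denom :=
      (div_eq_iff hd).mp (RatFunc.num_div_denom φ)
    have key : algebraMap K[X] (RatFunc K) q * φ = algebraMap K[X] (RatFunc K) p := by
      rw [hp, hq, map_mul, map_mul, mul_assoc,
        mul_comm (algebraMap K[X] (RatFunc K) φ.denom) φ, ← hm]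
      exact (map_mul _ _ _).symm
    let qh : polyDRing D := ⟨algebraMap K[X] (RatFunc K) q, ⟨q, hqD, rfl⟩⟩
    let ph : polyDRing D := ⟨algebraMap K[X] (RatFunc K) p, ⟨p, hpD, rfl⟩⟩
    have hsm : algebraMap (polyDRing D) (IntR E D) ph = qh • (⟨φ, hφ⟩ : IntR E D) := by
      apply Subtype.ext
      show algebraMap K[X] (RatFunc K) p = ((qh • (⟨φ, hφ⟩ : IntR E D) : IntR E D) : RatFunc K)
      have : (qh • (⟨φ, hφ⟩ : IntR E D)) = algebraMap (polyDRing D) (IntR E D) qh * ⟨φ, hφ⟩ :=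
        Algebra.smul_def _ _
      rw [this]
      exact key.symm
    obtain ⟨a, ha⟩ := ff_principal_contract ⟨_, hsm⟩
    have hval : algebraMap K[X] (RatFunc K) p
        = algebraMap K[X] (RatFunc K) q * (a : RatFunc K) := by
      rw [show algebraMap K[X] (RatFunc K) p = (ph : RatFunc K) from rfl, ha]; rfl
    have hqne : algebraMap K[X] (RatFunc K) q ≠ 0 := RatFunc.algebraMap_ne_zero hq0
    have hφa : φ = (a : RatFunc K) := mul_left_cancel₀ hqne (key.trans hval)
    rw [hφa]; exact a.2
  · intro h
    let r := (RingEquiv.subringCongr h).symm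
    refine Module.FaithfullyFlat.of_linearEquiv _ _
      ({ toFun := r, invFun := r.symm, left_inv := r.left_inv, right_inv := r.right_inv,
         map_add' := r.map_add, map_smul' := fun x b => ?_ } :
        IntR E D ≃ₗ[polyDRing D] polyDRing D)
    apply Subtype.ext
    show ((x • b : IntR E D) : RatFunc K) = ((x • r b : polyDRing D) : RatFunc K)
    have h1 : (x • b : IntR E D) = algebraMap (polyDRing D) (IntR E D) x * b := Algebra.smul_def _ _
    have h2 : (x • r b : polyDRing D) = x * r b := rfl
    rw [h1, h2]
    rfl
end
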